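/- Consider the map from bounded complexes of finitely generated free abelian groups to differential Z-structures sending a complex X (with components Xⁱ and differentials dⁱ) to (⊕ᵢ Xⁱ, e) where e is the sum of the differentials (the 'push-down' functor). Then every perfect differential Z-structure (N,e) (N free abelian of finite rank, e² = 0) lies in the image up to isomorphism; explicitly (N,e) ≅ η(0 → I →^μ Ker e → 0) where I ≅ Im e and μ is induced by e. However, the analogous push-down on all finitely generated abelian groups is not dense: (Z/p², multiplication by p) is not isomorphic to η(X) for any bounded complex X of finitely generated abelian groups. -/

import Mathlib

open DirectSum

/-- The total differential of a complex: the push-down functor `η` sends a complex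
`(Xⁱ, dⁱ)` of abelian groups to the differential structure `(⊕ᵢ Xⁱ, e)` where `e` is
the sum of the differentials. -/
noncomputable def totalDiff (X : ℤ → ModuleCat.{0} ℤ) (d : ∀ i : ℤ, X i →ₗ[ℤ] X (i + 1)) :
    (⨁ i, X i) →ₗ[ℤ] ⨁ i, X i :=
  (@DirectSum.toModule ℤ _ ℤ (fun j => X j) _ _ _ (⨁ i, X i) _ DirectSum.instModule
    fun i => (DirectSum.lof ℤ ℤ (fun j => X j) (i + 1)) ∘ₗ d i).toAddMonoidHom.toIntLinearMap

/-- If `p • v ≠ 0`, `p² • v = 0` and `n • v = 0` then `p² ∣ n`. -/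
lemma aux_dvd (p : ℕ) (hp : p.Prime) {M : Type} [AddCommGroup M] (v : M)
    (hv : (p : ℤ) • v ≠ 0) (hv2 : ((p : ℤ) ^ 2) • v = 0) (n : ℤ) (hn : n • v = 0) :
    ((p : ℤ) ^ 2) ∣ n := by
  set g : ℕ := Int.gcd n ((p : ℤ) ^ 2) with hg
  have hgdvd : g ∣ p ^ 2 := by
    have := Int.gcd_dvd_right (a := n) (b := (p : ℤ) ^ 2)
    rw [Int.natCast_dvd_natCast.symm]
    push_cast
    exact this
  obtain ⟨k, hk2, hgk⟩ := (Nat.dvd_prime_pow hp).mp hgdvd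
  have hgv : (g : ℤ) • v = 0 := by
    have hbez := Int.gcd_eq_gcd_ab n ((p : ℤ) ^ 2)
    rw [← hg] at hbez
    rw [hbez, add_smul, mul_comm n, mul_smul, mul_comm ((p:ℤ)^2), mul_smul, hn, hv2,
      smul_zero, smul_zero, add_zero]
  have hk : k = 2 := by
    by_contra hne
    have hk1 : k ≤ 1 := by omega
    have hgp : g ∣ p := by
      rw [hgk]
      calc p ^ k ∣ p ^ 1 := pow_dvd_pow p hk1
        _ = p := pow_one p
    obtain ⟨c, hc⟩ := hgp
    apply hv
    have : (p : ℤ) = (g : ℤ) * (c : ℤ) := by push_cast [hc]; ring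
    rw [this, mul_comm, mul_smul, hgv, smul_zero]
  have : ((g : ℤ)) ∣ n := Int.gcd_dvd_left n ((p : ℤ) ^ 2)
  rw [hgk, hk] at this
  push_cast at this
  exact this

set_option maxHeartbeats 1000000 in
/-- (a) Every perfect differential `ℤ`-structure `(N, e)` — `N` free abelian of finite
rank, `e² = 0` — is isomorphic to the push-down of the width-2 complex
`0 → I → ker e → 0` with `I ≅ im e` and differential induced by `e`: there is an
isomorphism `N ≅ im e ⊕ ker e` carrying `e` to `(m, k) ↦ (0, ι m)`, `ι` the inclusion
`im e ⊆ ker e`.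
(b) The analogous push-down on all finitely generated abelian groups is not dense: for
a prime `p`, `(ℤ/p², multiplication by p)` is not isomorphic to the push-down of any
bounded complex of finitely generated abelian groups. -/
theorem stmt19 :
    (∀ (N : Type) [AddCommGroup N] [Module ℤ N] [Module.Free ℤ N] [Module.Finite ℤ N]
      (e : N →ₗ[ℤ] N) (he : e ∘ₗ e = 0),
      ∃ φ : N ≃ₗ[ℤ] (LinearMap.range e × LinearMap.ker e),
        ∀ x, φ (e x) =
          (0, Submodule.inclusion (LinearMap.range_le_ker_iff.mpr he) (φ x).1)) ∧
    (∀ p : ℕ, p.Prime →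
      ¬ ∃ (X : ℤ → ModuleCat.{0} ℤ) (d : ∀ i : ℤ, X i →ₗ[ℤ] X (i + 1)),
        (∀ i, Module.Finite ℤ (X i)) ∧
        (∀ i, (d (i + 1)) ∘ₗ (d i) = 0) ∧
        (∃ N : ℕ, ∀ i : ℤ, (N : ℤ) < |i| → Subsingleton (X i)) ∧
        ∃ φ : ZMod (p ^ 2) ≃ₗ[ℤ] (⨁ i, X i),
          ∀ x : ZMod (p ^ 2), φ ((p : ZMod (p ^ 2)) * x) = totalDiff X d (φ x)) := by
  constructor
  · intro N iAG iM iF iFin e he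
    obtain rfl : iM = AddCommGroup.toIntModule N :=
      @Subsingleton.elim _ (@Unique.instSubsingleton _ AddCommGroup.uniqueIntModule) _ _
    haveI : NoZeroSMulDivisors ℤ N := by
      haveI : IsAddTorsionFree N := Module.isTorsionFree_int_iff_isAddTorsionFree.mp inferInstance
      infer_instance
    haveI : Module.Finite ℤ (LinearMap.range e) := Module.Finite.range e
    haveI : Module.Free ℤ (LinearMap.range e) := inferInstance
    obtain ⟨s, hs⟩ : ∃ s : (LinearMap.range e) →ₗ[ℤ] N, e.rangeRestrict ∘ₗ s = LinearMap.id :=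
      Module.projective_lifting_property _ _ e.surjective_rangeRestrict
    have hs' : ∀ m : LinearMap.range e, e.rangeRestrict (s m) = m := fun m =>
      DFunLike.congr_fun hs m
    have hes : ∀ m : LinearMap.range e, e (s m) = (m : N) := by
      intro m
      have := congrArg (Subtype.val) (hs' m)
      simpa using this
    have hee : ∀ x : N, e (e x) = 0 := fun x => DFunLike.congr_fun he x
    have hker : ∀ x : N, e (x - s (e.rangeRestrict x)) = 0 := by
      intro x
      simp [map_sub, hes]
    let f : N →ₗ[ℤ] (LinearMap.range e × LinearMap.ker e) :=
      LinearMap.prod e.rangeRestrict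
        ((LinearMap.id - s ∘ₗ e.rangeRestrict).codRestrict (LinearMap.ker e)
          (by intro x; simpa [LinearMap.mem_ker] using hker x))
    have hf1 : ∀ x, (f x).1 = e.rangeRestrict x := fun x => rfl
    have hf2 : ∀ x, ((f x).2 : N) = x - s (e.rangeRestrict x) := fun x => rfl
    let φ : N ≃ₗ[ℤ] (LinearMap.range e × LinearMap.ker e) :=
      { f with
        invFun := fun mk => s mk.1 + (mk.2 : N)
        left_inv := by
          intro x
          show s ((f x).1) + ((f x).2 : N) = x
          rw [hf1, hf2]; abel
        right_inv := by
          rintro ⟨m, k⟩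
          have hk : e (k : N) = 0 := k.2
          have h1 : e.rangeRestrict (s m + (k : N)) = m := by
            apply Subtype.ext
            simp [hes, hk]
          refine Prod.ext ?_ ?_
          · show (f _).1 = m
            rw [hf1, h1]
          · apply Subtype.ext
            show ((f _).2 : N) = (k : N)
            rw [hf2, h1]
            rw [add_sub_cancel_left] }
    refine ⟨φ, fun x => ?_⟩
    have h0 : e.rangeRestrict (e x) = 0 := by
      apply Subtype.ext; simp [hee]
    refine Prod.ext ?_ ?_
    · show (f (e x)).1 = 0
      rw [hf1, h0]
    · apply Subtype.ext
      show ((f (e x)).2 : N) = _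
      rw [hf2, h0]
      show e x - s 0 = ((Submodule.inclusion (LinearMap.range_le_ker_iff.mpr he) (φ x).1 : LinearMap.ker e) : N)
      rw [map_zero, sub_zero]
      rfl
  · rintro p hp ⟨X, d, hfin, hdd, hbd, φ, hφ⟩
    haveI : NeZero (p ^ 2) := ⟨pow_ne_zero 2 hp.ne_zero⟩
    set y := φ 1 with hy
    have hsm : ∀ x : ZMod (p ^ 2), (p : ZMod (p ^ 2)) * x = (p : ℤ) • x := by
      intro x; rw [zsmul_eq_mul]; push_cast; ring
    have h1 : totalDiff X d y = (p : ℤ) • y := by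
      have h := hφ 1
      rw [hsm, map_smul] at h
      exact h.symm
    have h2 : ((p : ℤ) ^ 2) • y = 0 := by
      rw [hy, ← map_smul]
      convert map_zero φ.toLinearMap using 2
      rw [zsmul_eq_mul, mul_one]
      push_cast
      congr 1
      exact_mod_cast ZMod.natCast_self (p ^ 2)
    have hpy : (p : ℤ) • y ≠ 0 := by
      intro h
      rw [hy, ← map_smul] at h
      have h0 : ((p : ℤ) • (1 : ZMod (p ^ 2))) = 0 := by
        have := φ.injective (by simpa using h)
        simpa using this
      rw [zsmul_eq_mul, mul_one] at h0
      push_cast at h0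
      have : (p ^ 2 : ℕ) ∣ p := (ZMod.natCast_eq_zero_iff p (p ^ 2)).mp h0
      have := Nat.le_of_dvd hp.pos this
      nlinarith [hp.two_le]
    obtain ⟨i₀, hi₀⟩ : ∃ i, (p : ℤ) • (y i) ≠ 0 := by
      by_contra h
      push_neg at h
      apply hpy
      refine DFinsupp.ext fun i => ?_
      rw [DFinsupp.zsmul_apply]
      exact h i
    have hgen : ∀ z : ⨁ i, X i, ∃ n : ℤ, z = n • y := by
      intro z
      obtain ⟨c, rfl⟩ := φ.surjective z
      refine ⟨(c.val : ℤ), ?_⟩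
      rw [hy, ← map_smul]
      congr 1
      rw [zsmul_eq_mul, mul_one]
      push_cast
      simp [ZMod.natCast_val, ZMod.cast_id]
    have hv2 : ((p : ℤ) ^ 2) • (y i₀) = 0 := by
      rw [← DFinsupp.zsmul_apply, h2]; rfl
    have hzero : ∀ j, j ≠ i₀ → ∀ x : X j, x = 0 := by
      intro j hj x
      obtain ⟨n, hn⟩ := hgen (DirectSum.lof ℤ ℤ (fun i => X i) j x)
      have hni : n • (y i₀) = 0 := by
        rw [← DFinsupp.zsmul_apply, ← hn]
        exact DirectSum.of_eq_of_ne _ _ _ hj.symm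
      obtain ⟨m, rfl⟩ := aux_dvd p hp (y i₀) hi₀ hv2 n hni
      have hzy : ((p : ℤ) ^ 2 * m) • y = 0 := by
        rw [mul_smul, ← smul_comm, h2, smul_zero]  -- maybe fix
      rw [hzy] at hn
      have := congrArg (fun z : ⨁ i, X i => z j) hn
      simpa [DirectSum.lof_apply] using this
    have hyj : ∀ j, j ≠ i₀ → y j = 0 := fun j hj => hzero j hj (y j)
    have hylof : y = DirectSum.lof ℤ ℤ (fun i => X i) i₀ (y i₀) := by
      refine DFinsupp.ext fun j => ?_
      by_cases hj : j = i₀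
      · subst hj; exact (DirectSum.lof_apply ℤ (M := fun i => X i) j (y j)).symm
      · rw [hyj j hj]
        rw [DirectSum.lof_eq_of]
        exact (DirectSum.of_eq_of_ne (β := fun i => X i) _ _ _ hj).symm
    have htd : totalDiff X d y = 0 := by
      rw [hylof]
      show (@DirectSum.toModule ℤ _ ℤ (fun j => X j) _ _ _ (⨁ i, X i) _ DirectSum.instModule fun i => (DirectSum.lof ℤ ℤ (fun j => X j) (i + 1)) ∘ₗ d i) (DirectSum.lof ℤ ℤ (fun i => X i) i₀ (y i₀)) = 0
      rw [DirectSum.toModule_lof]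
      have : d i₀ (y i₀) = 0 := hzero (i₀ + 1) (by omega) _
      simp [this]
    rw [htd] at h1
    exact hpy h1.symm
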